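/- (Pointwise Picone inequality.) For every p > 1, all vectors a, b ∈ ℝ^N and reals s, t > 0: |a|^p − p·(t/s)^{p−1}·|b|^{p−2}⟨b, a⟩ + (p−1)·(t/s)^p·|b|^p ≥ 0, with equality if and only if a = (t/s) b. -/

import Mathlib

private lemma young_aux (p : ℝ) (hp : 1 < p) {X Y : ℝ} (hX : 0 ≤ X) (hY : 0 < Y) :
    0 ≤ X ^ p - p * Y ^ (p - 1) * X + (p - 1) * Y ^ p ∧
      (X ^ p - p * Y ^ (p - 1) * X + (p - 1) * Y ^ p = 0 ↔ X = Y) := by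
  set u : ℝ := X / Y with hu
  have hu0 : 0 ≤ u := div_nonneg hX hY.le
  have hXu : X = u * Y := by rw [hu, div_mul_cancel₀ X hY.ne']
  have hYp : (0 : ℝ) < Y ^ p := Real.rpow_pos_of_pos hY p
  have hXp : X ^ p = u ^ p * Y ^ p := by
    rw [hXu, Real.mul_rpow hu0 hY.le]
  have hY1 : Y ^ (p - 1) * Y = Y ^ p := by
    rw [← Real.rpow_add_one hY.ne' (p - 1)]; ring_nf
  have key : X ^ p - p * Y ^ (p - 1) * X + (p - 1) * Y ^ p
      = Y ^ p * (u ^ p - (1 + p * (u - 1))) := by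
    rw [hXp, hXu]
    have : p * Y ^ (p - 1) * (u * Y) = p * u * (Y ^ (p - 1) * Y) := by ring
    rw [this, hY1]; ring
  have hber : 1 + p * (u - 1) ≤ u ^ p := by
    have := one_add_mul_self_le_rpow_one_add (s := u - 1) (by linarith) (p := p) hp.le
    simpa using this
  constructor
  · rw [key]; nlinarith
  · rw [key]
    constructor
    · intro h
      by_contra hne
      have hune : u - 1 ≠ 0 := by
        intro h1
        apply hne
        have : u = 1 := by linarith
        rw [hXu, this, one_mul]
      have := one_add_mul_self_lt_rpow_one_add (s := u - 1) (by linarith) hune hp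
      simp only [add_sub_cancel] at this
      nlinarith
    · intro h
      have : u = 1 := by rw [hu, h, div_self hY.ne']
      rw [this]
      simp [Real.one_rpow]

open Classical in
/-- Pointwise Picone inequality: for `p > 1`, `a b ∈ ℝ^N`, `s, t > 0`,
`|a|^p − p(t/s)^(p−1)|b|^(p−2)⟨b,a⟩ + (p−1)(t/s)^p|b|^p ≥ 0`,
with equality iff `a = (t/s)b`; `|b|^(p−2)b` interpreted as `0` when `b = 0`. -/
theorem stmt_12 (N : ℕ) (p s t : ℝ) (hp : 1 < p) (hs : 0 < s) (ht : 0 < t)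
    (a b : EuclideanSpace ℝ (Fin N)) :
    0 ≤ ‖a‖ ^ p - p * (t / s) ^ (p - 1) * (if b = 0 then 0 else ‖b‖ ^ (p - 2) * (inner ℝ b a : ℝ))
        + (p - 1) * (t / s) ^ p * ‖b‖ ^ p ∧
      (‖a‖ ^ p - p * (t / s) ^ (p - 1) * (if b = 0 then 0 else ‖b‖ ^ (p - 2) * (inner ℝ b a : ℝ))
          + (p - 1) * (t / s) ^ p * ‖b‖ ^ p = 0 ↔ a = (t / s) • b) := by
  have hc : (0 : ℝ) < t / s := div_pos ht hs
  set c : ℝ := t / s with hcdef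
  by_cases hb : b = 0
  · subst hb
    rw [if_pos rfl, norm_zero, Real.zero_rpow (by positivity : p ≠ 0)]
    have hA : (0 : ℝ) ≤ ‖a‖ := norm_nonneg a
    have heq : ‖a‖ ^ p - p * c ^ (p - 1) * 0 + (p - 1) * c ^ p * 0 = ‖a‖ ^ p := by ring
    rw [heq, smul_zero]
    exact ⟨Real.rpow_nonneg hA p,
      by rw [Real.rpow_eq_zero hA (by positivity : p ≠ 0), norm_eq_zero]⟩
  · rw [if_neg hb]
    set A : ℝ := ‖a‖ with hAdef
    set B : ℝ := ‖b‖ with hBdef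
    have hA : 0 ≤ A := norm_nonneg a
    have hB : 0 < B := norm_pos_iff.mpr hb
    set I : ℝ := (inner ℝ b a : ℝ) with hIdef
    have hCS : I ≤ B * A := real_inner_le_norm b a
    have hY := young_aux p hp (X := A) (Y := c * B) hA (mul_pos hc hB)
    have h1 : (c * B) ^ (p - 1) = c ^ (p - 1) * B ^ (p - 1) :=
      Real.mul_rpow hc.le hB.le
    have h2 : (c * B) ^ p = c ^ p * B ^ p := Real.mul_rpow hc.le hB.le
    have h3 : B ^ (p - 2) * B = B ^ (p - 1) := by
      rw [← Real.rpow_add_one hB.ne' (p - 2)]; ring_nf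
    have hcoef : 0 < p * c ^ (p - 1) * B ^ (p - 2) := by
      have := Real.rpow_pos_of_pos hc (p - 1)
      have := Real.rpow_pos_of_pos hB (p - 2)
      positivity
    have hE : A ^ p - p * c ^ (p - 1) * (B ^ (p - 2) * I) + (p - 1) * c ^ p * B ^ p
        = (A ^ p - p * (c * B) ^ (p - 1) * A + (p - 1) * (c * B) ^ p)
          + p * c ^ (p - 1) * B ^ (p - 2) * (B * A - I) := by
      rw [h1, h2, ← h3]; ring
    have hsec : 0 ≤ p * c ^ (p - 1) * B ^ (p - 2) * (B * A - I) := by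
      apply mul_nonneg hcoef.le; linarith
    constructor
    · rw [hE]; linarith [hY.1]
    · rw [hE]
      constructor
      · intro h
        have hY0 : A ^ p - p * (c * B) ^ (p - 1) * A + (p - 1) * (c * B) ^ p = 0 := by
          linarith [hY.1]
        have hAeq : A = c * B := hY.2.mp hY0
        have hI0 : B * A - I = 0 := by
          have : p * c ^ (p - 1) * B ^ (p - 2) * (B * A - I) = 0 := by linarith [hY.1]
          rcases mul_eq_zero.mp this with h' | h'
          · exact absurd h' hcoef.ne'
          · exact h'
        have hInner : (inner ℝ b a : ℝ) = ‖b‖ * ‖a‖ := by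
          rw [← hIdef, ← hBdef, ← hAdef]; linarith
        have hsmul : ‖a‖ • b = ‖b‖ • a := inner_eq_norm_mul_iff_real.mp hInner
        rw [← hAdef, ← hBdef, hAeq] at hsmul
        have ha : a = B⁻¹ • ((c * B) • b) := by
          rw [hsmul, smul_smul, inv_mul_cancel₀ hB.ne', one_smul]
        have hBc : B⁻¹ * (c * B) = c := by field_simp
        rw [ha, smul_smul, hBc]
      · intro h
        have hAeq : A = c * B := by
          rw [hAdef, h, norm_smul, Real.norm_eq_abs, abs_of_pos hc, hBdef]
        have hIeq : I = c * (B * B) := by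
          rw [hIdef, h, real_inner_smul_right, real_inner_self_eq_norm_mul_norm, ← hBdef]
        have hY0 : A ^ p - p * (c * B) ^ (p - 1) * A + (p - 1) * (c * B) ^ p = 0 :=
          hY.2.mpr hAeq
        rw [hY0, hAeq, hIeq]
        ring
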